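/- Let (F;R₁,…,R_n) be a normal (n+1)-ad of groups which is simple relative to R_j for some 1 ≤ j ≤ n, with witnessing subgroup F' (i.e. F' ∩ R_j = 1 and ⋂_{i∈A}R_i = (⋂_{i∈A}R_i ∩ F')·(⋂_{i∈A}R_i ∩ R_j) for all A ⊆ ⟨n⟩∖{j}), and let k ≥ 1. Then for every A ⊆ ⟨n⟩∖{j}: D_k(F;A) = (D_k(F;A) ∩ F')·D_k(F;A ∪ {j}) (product of subsets). -/

import Mathlib

open Pointwise

/-- Iterated commutator `⁅H₁, ⁅H₂, …, ⁅H_{k-1}, H_k⁆…⁆⁆` of a list of subgroups. -/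
def iterCommutator {F : Type*} [Group F] : List (Subgroup F) → Subgroup F
  | [] => ⊥
  | [H] => H
  | H :: t => ⁅H, iterCommutator t⁆

/-- `K_B = ⋂_{i∈B} R_i`, with the convention `K_∅ = F`. -/
def adInf {F : Type*} [Group F] {n : ℕ} (R : Fin n → Subgroup F) (B : Finset (Fin n)) :
    Subgroup F :=
  ⨅ i ∈ B, R i

/-- `D_k(F;A)`: the product (join) of the iterated commutator subgroups
`⁅K_{A₁},⁅K_{A₂},…,⁅K_{A_{k-1}},K_{A_k}⁆…⁆⁆` over all `k`-tuples `(A₁,…,A_k)` of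
(possibly empty) subsets with `A₁ ∪ ⋯ ∪ A_k = A`. -/
def adD {F : Type*} [Group F] {n : ℕ} (R : Fin n → Subgroup F) (k : ℕ) (A : Finset (Fin n)) :
    Subgroup F :=
  ⨆ (c : Fin k → Finset (Fin n)) (_ : Finset.univ.sup c = A),
    iterCommutator (List.ofFn fun i => adInf R (c i))

section Aux
variable {F : Type*} [Group F]
open scoped commutatorElement

theorem iterCommutator_nil : iterCommutator ([] : List (Subgroup F)) = ⊥ := rfl
theorem iterCommutator_singleton (H : Subgroup F) : iterCommutator [H] = H := rfl
theorem iterCommutator_cons (H a : Subgroup F) (t : List (Subgroup F)) :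
    iterCommutator (H :: a :: t) = ⁅H, iterCommutator (a :: t)⁆ := rfl

theorem iterCommutator_map_mono {α : Type*} :
    ∀ (l : List α) (f g : α → Subgroup F), (∀ x ∈ l, f x ≤ g x) →
      iterCommutator (l.map f) ≤ iterCommutator (l.map g)
  | [], _, _, _ => le_rfl
  | [x], f, g, h => by simpa [iterCommutator_singleton] using h x (by simp)
  | x :: y :: t, f, g, h => by
      simp only [List.map_cons, iterCommutator_cons]
      refine Subgroup.commutator_mono (h x (by simp)) ?_
      have := iterCommutator_map_mono (y :: t) f g (fun z hz => h z (List.mem_cons_of_mem _ hz))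
      simpa using this

theorem iterCommutator_le_of_forall_le :
    ∀ (l : List (Subgroup F)), l ≠ [] → ∀ (G' : Subgroup F), (∀ H ∈ l, H ≤ G') →
      iterCommutator l ≤ G'
  | [], h, _, _ => absurd rfl h
  | [H], _, G', hm => by simpa [iterCommutator_singleton] using hm H (by simp)
  | H :: a :: t, _, G', hm => by
      rw [iterCommutator_cons, Subgroup.commutator_le]
      intro g₁ hg₁ g₂ hg₂
      have h1 : g₁ ∈ G' := hm H (by simp) hg₁
      have h2 : g₂ ∈ G' :=
        iterCommutator_le_of_forall_le (a :: t) (by simp) G'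
          (fun K hK => hm K (List.mem_cons_of_mem _ hK)) hg₂
      rw [commutatorElement_def]
      exact mul_mem (mul_mem (mul_mem h1 h2) (inv_mem h1)) (inv_mem h2)

theorem iterCommutator_normal :
    ∀ (l : List (Subgroup F)), (∀ H ∈ l, H.Normal) → (iterCommutator l).Normal
  | [], _ => by rw [iterCommutator_nil]; exact inferInstance
  | [H], h => by rw [iterCommutator_singleton]; exact h H (by simp)
  | H :: a :: t, h => by
      rw [iterCommutator_cons]
      haveI h1 : H.Normal := h H (by simp)
      haveI h2 : (iterCommutator (a :: t)).Normal :=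
        iterCommutator_normal (a :: t) (fun K hK => h K (List.mem_cons_of_mem _ hK))
      exact Subgroup.commutator_normal _ _

theorem normal_iSup {ι : Sort*} (f : ι → Subgroup F) (h : ∀ i, (f i).Normal) :
    (⨆ i, f i).Normal := by
  constructor
  intro x hx g
  refine Subgroup.iSup_induction f (C := fun y => g * y * g⁻¹ ∈ ⨆ i, f i) hx ?_ ?_ ?_
  · intro i y hy
    exact Subgroup.mem_iSup_of_mem i ((h i).conj_mem y hy g)
  · simpa using one_mem (⨆ i, f i)
  · intro y z hy hz
    have hyz : g * (y * z) * g⁻¹ = (g * y * g⁻¹) * (g * z * g⁻¹) := by group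
    rw [hyz]; exact mul_mem hy hz

theorem commutator_iSup_le {ι : Sort*} (P : Subgroup F) (f : ι → Subgroup F)
    (hP : P.Normal) (hf : ∀ i, (f i).Normal) :
    ⁅P, ⨆ i, f i⁆ ≤ ⨆ i, ⁅P, f i⁆ := by
  haveI hN : (⨆ i, ⁅P, f i⁆).Normal :=
    normal_iSup _ (fun i => by haveI := hf i; haveI := hP; exact Subgroup.commutator_normal _ _)
  rw [Subgroup.commutator_le]
  intro g hg y hy
  refine Subgroup.iSup_induction f (C := fun y => ∀ g ∈ P, ⁅g, y⁆ ∈ ⨆ i, ⁅P, f i⁆) hy ?_ ?_ ?_ g hg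
  · intro i y hy g hg
    exact Subgroup.mem_iSup_of_mem i (Subgroup.commutator_mem_commutator hg hy)
  · intro g hg; simpa using one_mem (⨆ i, ⁅P, f i⁆)
  · intro y z hy hz g hg
    have key : ⁅g, y * z⁆ = ⁅g, y⁆ * (y * ⁅g, z⁆ * y⁻¹) := by
      simp only [commutatorElement_def]; group
    rw [key]
    exact mul_mem (hy g hg) (hN.conj_mem _ (hz g hg) y)

theorem commutator_sup_right_le (P Q R : Subgroup F) (hP : P.Normal) (hQ : Q.Normal)
    (hR : R.Normal) : ⁅P, Q ⊔ R⁆ ≤ ⁅P, Q⁆ ⊔ ⁅P, R⁆ := by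
  have h := commutator_iSup_le P (fun b : Bool => if b then Q else R) hP
    (fun b => by cases b <;> simpa)
  have hQR : Q ⊔ R = ⨆ b : Bool, (if b then Q else R) := by
    rw [iSup_bool_eq]; simp [sup_comm]
  rw [hQR]
  refine h.trans (iSup_le fun b => ?_)
  cases b <;> simp [le_sup_left, le_sup_right]

theorem step_lemma (P M S E W : Subgroup F) (hM : M.Normal) (hE : E.Normal) (hW : W.Normal)
    (h1 : ⁅M, S ⊔ E⁆ ≤ W) (h2 : ⁅P, E⁆ ≤ W) :
    ⁅P ⊔ M, S ⊔ E⁆ ≤ ⁅P, S⁆ ⊔ W := by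
  rw [Subgroup.commutator_le]
  intro g hg y hy
  haveI := hM; haveI := hE; haveI := hW
  have hg' : g ∈ (↑P * ↑M : Set F) := by
    rw [← Subgroup.mul_normal]; exact hg
  have hy' : y ∈ (↑S * ↑E : Set F) := by
    rw [← Subgroup.mul_normal]; exact hy
  obtain ⟨p, hp, m, hm, rfl⟩ := hg'
  obtain ⟨s, hs, e, he, rfl⟩ := hy'
  have key : ⁅p * m, s * e⁆ =
      (p * ⁅m, s * e⁆ * p⁻¹) * (⁅p, s⁆ * (s * ⁅p, e⁆ * s⁻¹)) := by
    simp only [commutatorElement_def]; group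
  rw [key]
  have w1 : p * ⁅m, s * e⁆ * p⁻¹ ∈ W :=
    hW.conj_mem _ (h1 (Subgroup.commutator_mem_commutator hm
      (mul_mem (Subgroup.mem_sup_left hs) (Subgroup.mem_sup_right he)))) p
  have w2 : s * ⁅p, e⁆ * s⁻¹ ∈ W :=
    hW.conj_mem _ (h2 (Subgroup.commutator_mem_commutator hp he)) s
  have c1 : ⁅p, s⁆ ∈ ⁅P, S⁆ := Subgroup.commutator_mem_commutator hp hs
  exact mul_mem (Subgroup.mem_sup_right w1)
    (mul_mem (Subgroup.mem_sup_left c1) (Subgroup.mem_sup_right w2))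

def pick (x : Subgroup F × Subgroup F × Subgroup F) (b : Bool) : Subgroup F :=
  if b then x.2.2 else x.1

def iterE (l : List (Subgroup F × Subgroup F × Subgroup F)) : Subgroup F :=
  ⨆ b : {b : List Bool // b.length = l.length ∧ true ∈ b},
    iterCommutator (List.zipWith pick l b.1)

theorem mem_zipWith_pick {l : List (Subgroup F × Subgroup F × Subgroup F)} {b : List Bool}
    {H : Subgroup F} (h : H ∈ List.zipWith pick l b) : ∃ x ∈ l, H = x.1 ∨ H = x.2.2 := by
  induction l generalizing b with
  | nil => simp at h
  | cons x t ih =>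
    cases b with
    | nil => simp at h
    | cons b0 bs =>
      rw [List.zipWith_cons_cons] at h
      rcases List.mem_cons.1 h with h | h
      · refine ⟨x, by simp, ?_⟩
        cases b0 <;> simp [pick] at h <;> simp [h]
      · obtain ⟨z, hz, hz2⟩ := ih h
        exact ⟨z, List.mem_cons_of_mem _ hz, hz2⟩

theorem zipWith_pick_replicate : ∀ (l : List (Subgroup F × Subgroup F × Subgroup F)),
    List.zipWith pick l (List.replicate l.length false) = l.map (·.1)
  | [] => rfl
  | x :: t => by
      simp only [List.length_cons, List.replicate_succ, List.zipWith_cons_cons, List.map_cons,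
        zipWith_pick_replicate t]
      rfl

theorem iterE_normal (l : List (Subgroup F × Subgroup F × Subgroup F))
    (hyp : ∀ x ∈ l, x.1.Normal ∧ x.2.2.Normal) : (iterE l).Normal :=
  normal_iSup _ fun b => iterCommutator_normal _ fun H hH => by
    obtain ⟨x, hx, h⟩ := mem_zipWith_pick hH
    rcases h with rfl | rfl
    exacts [(hyp x hx).1, (hyp x hx).2]

theorem claimA : ∀ (l : List (Subgroup F × Subgroup F × Subgroup F)), l ≠ [] →
    (∀ x ∈ l, x.1.Normal ∧ x.2.2.Normal ∧ x.1 ≤ x.2.1 ⊔ x.2.2 ∧ x.2.1 ≤ x.1) →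
    iterCommutator (l.map (·.1)) ≤ iterCommutator (l.map (·.2.1)) ⊔ iterE l
  | [], h, _ => absurd rfl h
  | [x], _, hyp => by
      simp only [List.map_cons, List.map_nil, iterCommutator_singleton]
      obtain ⟨_, _, hKHM, _⟩ := hyp x (by simp)
      refine hKHM.trans (sup_le_sup le_rfl ?_)
      have hx : x.2.2 = iterCommutator (List.zipWith pick [x] [true]) := by
        simp [pick, iterCommutator_singleton]
      rw [hx]
      exact le_iSup (fun b : {b : List Bool // b.length = [x].length ∧ true ∈ b} =>
        iterCommutator (List.zipWith pick [x] b.1)) ⟨[true], by simp⟩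
  | x :: y :: t, _, hyp => by
      have hyp' : ∀ z ∈ y :: t, z.1.Normal ∧ z.2.2.Normal ∧ z.1 ≤ z.2.1 ⊔ z.2.2 ∧ z.2.1 ≤ z.1 :=
        fun z hz => hyp z (List.mem_cons_of_mem _ hz)
      have hyp2 : ∀ z ∈ x :: y :: t, z.1.Normal ∧ z.2.2.Normal :=
        fun z hz => ⟨(hyp z hz).1, (hyp z hz).2.1⟩
      obtain ⟨hK1, hM1, hKHM, hHK⟩ := hyp x (by simp)
      set T' := iterCommutator ((y :: t).map (·.1)) with hT'
      set S' := iterCommutator ((y :: t).map (·.2.1)) with hS'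
      set E' := iterE (y :: t) with hE'
      set W := iterE (x :: y :: t) with hW
      have IH := claimA (y :: t) (by simp) hyp'
      have hT'n : T'.Normal := iterCommutator_normal _ (by
        intro H hH
        obtain ⟨z, hz, rfl⟩ := List.mem_map.1 hH
        exact (hyp' z hz).1)
      have hE'n : E'.Normal := iterE_normal _ (fun z hz => ⟨(hyp' z hz).1, (hyp' z hz).2.1⟩)
      have hWn : W.Normal := iterE_normal _ hyp2
      -- (a)
      have ha : ⁅x.2.2, T'⁆ ≤ W := by
        have heq : List.zipWith pick (x :: y :: t)
            (true :: List.replicate (y :: t).length false) = x.2.2 :: (y :: t).map (·.1) := by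
          rw [List.zipWith_cons_cons, zipWith_pick_replicate]
          rfl
        have : ⁅x.2.2, T'⁆ = iterCommutator (List.zipWith pick (x :: y :: t)
            (true :: List.replicate (y :: t).length false)) := by
          rw [heq, List.map_cons, iterCommutator_cons, hT', List.map_cons]
        rw [this]
        exact le_iSup (fun b : {b : List Bool // b.length = (x :: y :: t).length ∧ true ∈ b} =>
          iterCommutator (List.zipWith pick (x :: y :: t) b.1))
          ⟨true :: List.replicate (y :: t).length false, by simp⟩
      -- components of E' are normal
      have hcompn : ∀ b : {b : List Bool // b.length = (y :: t).length ∧ true ∈ b},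
          (iterCommutator (List.zipWith pick (y :: t) b.1)).Normal := by
        intro b
        refine iterCommutator_normal _ (fun H hH => ?_)
        obtain ⟨z, hz, h⟩ := mem_zipWith_pick hH
        rcases h with rfl | rfl
        exacts [(hyp' z hz).1, (hyp' z hz).2.1]
      -- (b) and (c)
      have hbc : ∀ P : Subgroup F, P.Normal → (∀ b0 : Bool,
            (∀ bs : List Bool, bs.length = (y :: t).length → true ∈ bs →
              pick x b0 = P → True)) → True := fun _ _ _ => trivial
      have hgen : ∀ (b0 : Bool) (hb0 : b0 = true ∨ b0 = false),
          ⁅pick x b0, E'⁆ ≤ W → True := fun _ _ _ => trivial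
      have hPE' : ∀ b0 : Bool, (pick x b0).Normal → ⁅pick x b0, E'⁆ ≤ W := by
        intro b0 hP
        have h1 : ⁅pick x b0, E'⁆ ≤ ⨆ b : {b : List Bool // b.length = (y :: t).length ∧ true ∈ b},
            ⁅pick x b0, iterCommutator (List.zipWith pick (y :: t) b.1)⁆ :=
          commutator_iSup_le _ _ hP hcompn
        refine h1.trans (iSup_le fun b => ?_)
        obtain ⟨bs, hlen, htr⟩ := b
        cases bs with
        | nil => simp at hlen
        | cons c0 cs =>
          have heq : ⁅pick x b0, iterCommutator (List.zipWith pick (y :: t) (c0 :: cs))⁆ =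
              iterCommutator (List.zipWith pick (x :: y :: t) (b0 :: c0 :: cs)) := rfl
          rw [heq]
          exact le_iSup (fun b : {b : List Bool // b.length = (x :: y :: t).length ∧ true ∈ b} =>
            iterCommutator (List.zipWith pick (x :: y :: t) b.1))
            ⟨b0 :: c0 :: cs, by simpa using hlen, List.mem_cons_of_mem _ htr⟩
      have hb : ⁅x.2.2, E'⁆ ≤ W := hPE' true hM1
      have hc : ⁅x.1, E'⁆ ≤ W := hPE' false hK1
      -- assemble
      have hS'T' : S' ≤ T' := iterCommutator_map_mono _ _ _ (fun z hz => (hyp' z hz).2.2.2)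
      have hMle : ⁅x.2.2, S' ⊔ E'⁆ ≤ W := by
        calc ⁅x.2.2, S' ⊔ E'⁆ ≤ ⁅x.2.2, T' ⊔ E'⁆ :=
              Subgroup.commutator_mono le_rfl (sup_le_sup hS'T' le_rfl)
          _ ≤ ⁅x.2.2, T'⁆ ⊔ ⁅x.2.2, E'⁆ := commutator_sup_right_le _ _ _ hM1 hT'n hE'n
          _ ≤ W := sup_le ha hb
      have hHE : ⁅x.2.1, E'⁆ ≤ W :=
        (Subgroup.commutator_mono hHK le_rfl).trans hc
      have hstep : ⁅x.2.1 ⊔ x.2.2, S' ⊔ E'⁆ ≤ ⁅x.2.1, S'⁆ ⊔ W :=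
        step_lemma _ _ _ _ _ hM1 hE'n hWn hMle hHE
      calc iterCommutator ((x :: y :: t).map (·.1)) = ⁅x.1, T'⁆ := by
            rw [List.map_cons, List.map_cons, iterCommutator_cons, hT', List.map_cons]
        _ ≤ ⁅x.2.1 ⊔ x.2.2, S' ⊔ E'⁆ := Subgroup.commutator_mono hKHM IH
        _ ≤ ⁅x.2.1, S'⁆ ⊔ W := hstep
        _ = iterCommutator ((x :: y :: t).map (·.2.1)) ⊔ W := by
            rw [List.map_cons, List.map_cons, iterCommutator_cons, hS', List.map_cons]

end Aux

section Aux2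
variable {F : Type*} [Group F] {n : ℕ}

theorem adInf_normal (R : Fin n → Subgroup F) (hR : ∀ i, (R i).Normal) (B : Finset (Fin n)) :
    (adInf R B).Normal := by
  constructor
  intro x hx g
  simp only [adInf, Subgroup.mem_iInf] at hx ⊢
  exact fun i hi => (hR i).conj_mem _ (hx i hi) g

theorem adInf_anti (R : Fin n → Subgroup F) {B B' : Finset (Fin n)} (h : B ⊆ B') :
    adInf R B' ≤ adInf R B := by
  intro x hx
  simp only [adInf, Subgroup.mem_iInf] at hx ⊢
  exact fun i hi => hx i (h hi)

theorem adInf_insert (R : Fin n → Subgroup F) (j : Fin n) (B : Finset (Fin n)) :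
    adInf R (insert j B) = adInf R B ⊓ R j := by
  ext x
  simp only [adInf, Subgroup.mem_iInf, Subgroup.mem_inf, Finset.mem_insert]
  constructor
  · intro h
    exact ⟨fun i hi => h i (Or.inr hi), h j (Or.inl rfl)⟩
  · rintro ⟨h1, h2⟩ i (rfl | hi)
    exacts [h2, h1 i hi]

theorem adD_normal (R : Fin n → Subgroup F) (hR : ∀ i, (R i).Normal) (k : ℕ)
    (A : Finset (Fin n)) : (adD R k A).Normal := by
  refine normal_iSup _ fun c => normal_iSup _ fun _ => iterCommutator_normal _ ?_
  intro H hH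
  rw [List.mem_ofFn] at hH
  obtain ⟨i, rfl⟩ := hH
  exact adInf_normal R hR _

theorem adD_insert_le (R : Fin n → Subgroup F) (k : ℕ) {j : Fin n} {A : Finset (Fin n)}
    (hA : j ∉ A) : adD R k (insert j A) ≤ adD R k A := by
  rw [adD]
  refine iSup_le fun c => iSup_le fun hc => ?_
  have h1 : iterCommutator (List.ofFn fun i => adInf R (c i)) ≤
      iterCommutator (List.ofFn fun i => adInf R ((c i).erase j)) := by
    rw [List.ofFn_eq_map, List.ofFn_eq_map]
    exact iterCommutator_map_mono _ _ _ fun i _ => adInf_anti R (Finset.erase_subset _ _)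
  have hcond : Finset.univ.sup (fun i => (c i).erase j) = A := by
    ext x
    simp only [Finset.mem_sup, Finset.mem_univ, true_and, Finset.mem_erase]
    constructor
    · rintro ⟨i, hxj, hxc⟩
      have : x ∈ insert j A := by
        rw [← hc]
        exact Finset.mem_sup.2 ⟨i, Finset.mem_univ i, hxc⟩
      rcases Finset.mem_insert.1 this with rfl | hxA
      · exact absurd rfl hxj
      · exact hxA
    · intro hxA
      have : x ∈ Finset.univ.sup c := by rw [hc]; exact Finset.mem_insert_of_mem hxA
      obtain ⟨i, _, hxc⟩ := Finset.mem_sup.1 this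
      exact ⟨i, fun h => hA (h ▸ hxA), hxc⟩
  exact h1.trans (le_iSup_of_le (fun i => (c i).erase j)
    (le_iSup_of_le hcond le_rfl))

end Aux2

/-- If the normal `(n+1)`-ad `(F;R₁,…,R_n)` is simple relative to `R_j` with witnessing
subgroup `F'`, then for all `A ⊆ ⟨n⟩∖{j}` and `k ≥ 1`:
`D_k(F;A) = (D_k(F;A) ∩ F')·D_k(F;A ∪ {j})`. -/
theorem adD_decomposition_of_simple {F : Type*} [Group F] {n : ℕ}
    (R : Fin n → Subgroup F) (hR : ∀ i, (R i).Normal) (k : ℕ) (hk : 1 ≤ k)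
    (j : Fin n) (F' : Subgroup F)
    (hF'1 : F' ⊓ R j = ⊥)
    (hF'2 : ∀ A : Finset (Fin n), j ∉ A →
      (adInf R A : Set F) = (↑(adInf R A ⊓ F') : Set F) * (↑(adInf R A ⊓ R j) : Set F)) :
    ∀ A : Finset (Fin n), j ∉ A →
      (adD R k A : Set F) = (↑(adD R k A ⊓ F') : Set F) * (↑(adD R k (insert j A)) : Set F) := by
  intro A hA
  haveI hN : (adD R k (insert j A)).Normal := adD_normal R hR k _
  rw [← Subgroup.mul_normal (adD R k A ⊓ F') (adD R k (insert j A)), SetLike.coe_set_eq]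
  refine le_antisymm ?_ (sup_le inf_le_left (adD_insert_le R k hA))
  conv_lhs => rw [adD]
  refine iSup_le fun c => iSup_le fun hc => ?_
  have hji : ∀ i, j ∉ c i := by
    intro i hji
    apply hA
    have h1 : c i ⊆ Finset.univ.sup c := Finset.le_sup (Finset.mem_univ i)
    rw [hc] at h1
    exact h1 hji
  set l : List (Subgroup F × Subgroup F × Subgroup F) :=
    List.ofFn (fun i : Fin k => (adInf R (c i), adInf R (c i) ⊓ F', adInf R (insert j (c i))))
    with hl
  have hmem : ∀ x ∈ l, ∃ i : Fin k,
      x = (adInf R (c i), adInf R (c i) ⊓ F', adInf R (insert j (c i))) := by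
    intro x hx
    rw [hl, List.mem_ofFn] at hx
    obtain ⟨i, rfl⟩ := hx
    exact ⟨i, rfl⟩
  have hne : l ≠ [] := by
    intro h
    have := congrArg List.length h
    simp [hl] at this
    omega
  have hyps : ∀ x ∈ l, x.1.Normal ∧ x.2.2.Normal ∧ x.1 ≤ x.2.1 ⊔ x.2.2 ∧ x.2.1 ≤ x.1 := by
    intro x hx
    obtain ⟨i, rfl⟩ := hmem x hx
    refine ⟨adInf_normal R hR _, adInf_normal R hR _, ?_, inf_le_left⟩
    intro g hg
    have hprod : (g : F) ∈ (↑(adInf R (c i) ⊓ F') : Set F) * ↑(adInf R (c i) ⊓ R j) := by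
      rw [← hF'2 (c i) (hji i)]; exact hg
    obtain ⟨a, ha, b, hb, rfl⟩ := hprod
    refine mul_mem (Subgroup.mem_sup_left ha) (Subgroup.mem_sup_right ?_)
    rw [adInf_insert]
    exact hb
  have main := claimA l hne hyps
  have hmapK : l.map (·.1) = List.ofFn (fun i => adInf R (c i)) := by
    rw [hl, List.map_ofFn]; rfl
  rw [hmapK] at main
  refine main.trans (sup_le_sup ?_ ?_)
  · -- iterCommutator (l.map (·.2.1)) ≤ adD R k A ⊓ F'
    refine le_inf ?_ ?_
    · have h1 : iterCommutator (l.map (·.2.1)) ≤ iterCommutator (l.map (·.1)) :=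
        iterCommutator_map_mono _ _ _ fun x hx => by
          obtain ⟨i, rfl⟩ := hmem x hx; exact inf_le_left
      rw [hmapK] at h1
      exact h1.trans (le_iSup_of_le c (le_iSup_of_le hc le_rfl))
    · refine iterCommutator_le_of_forall_le _ (by simpa using hne) F' ?_
      intro H hH
      obtain ⟨x, hx, rfl⟩ := List.mem_map.1 hH
      obtain ⟨i, rfl⟩ := hmem x hx
      exact inf_le_right
  · -- iterE l ≤ adD R k (insert j A)
    refine iSup_le ?_
    rintro ⟨bs, hlen, htr⟩
    have hlk : bs.length = k := by simpa [hl] using hlen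
    set B : Fin k → Finset (Fin n) := fun i =>
      if bs[(i : ℕ)]'(by rw [hlk]; exact i.isLt) then insert j (c i) else c i with hB
    have heq : List.zipWith pick l bs = List.ofFn (fun i => adInf R (B i)) := by
      apply List.ext_getElem
      · simp [hl, hlk]
      · intro i h1 h2
        simp only [List.getElem_zipWith, hl, List.getElem_ofFn, pick, hB]
        split_ifs with hb1 <;> rfl
    have hsup : Finset.univ.sup B = insert j A := by
      ext x
      simp only [Finset.mem_sup, Finset.mem_univ, true_and, Finset.mem_insert]
      constructor
      · rintro ⟨i, hxB⟩
        have hsub : c i ⊆ A := by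
          rw [← hc]
          exact Finset.le_sup (f := c) (Finset.mem_univ i)
        simp only [hB] at hxB
        split_ifs at hxB with hb
        · rcases Finset.mem_insert.1 hxB with rfl | hxc
          exacts [Or.inl rfl, Or.inr (hsub hxc)]
        · exact Or.inr (hsub hxB)
      · rintro (rfl | hxA)
        · obtain ⟨i0, hi0, hbi0⟩ := List.mem_iff_getElem.1 htr
          refine ⟨⟨i0, by omega⟩, ?_⟩
          simp only [hB]
          split_ifs with hb
          · exact Finset.mem_insert_self _ _
          · exact absurd (by simpa using hbi0) hb
        · have hx : x ∈ Finset.univ.sup c := by rw [hc]; exact hxA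
          obtain ⟨i, _, hxc⟩ := Finset.mem_sup.1 hx
          refine ⟨i, ?_⟩
          simp only [hB]
          split_ifs with hb
          · exact Finset.mem_insert_of_mem hxc
          · exact hxc
    rw [heq]
    exact le_iSup_of_le B (le_iSup_of_le hsup le_rfl)
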